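/- Fix n ≥ 3, set γ := 2 − 2/n, let α ∈ (0, γ − 1), and let h(t) := (1 − t²)^{−α} for |t| < 1. Let X := ℝ^{n−1} × (−1, 1) ⊆ ℝⁿ and define u : X → ℝ by u(x', x_n) := |x'|^γ h(x_n). Then u is convex on X, and u vanishes identically on the segment {0} × (−1, 1); in particular u is not strictly convex on X. -/

import Mathlib

set_option maxHeartbeats 1000000


open MeasureTheory Set
open scoped InnerProductSpace ENNReal

/-- `h(t) = (1 − t²)^{−α}`. -/
noncomputable def hPog (α t : ℝ) : ℝ := (1 - t ^ 2) ^ (-α)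

/-- The last coordinate `x_n` of `x ∈ ℝⁿ`. -/
def lastCoord (n : ℕ) (hn : 3 ≤ n) (x : EuclideanSpace ℝ (Fin n)) : ℝ :=
  x ⟨n - 1, by omega⟩

/-- The Euclidean norm `|x'|` of the first `n − 1` coordinates of `x ∈ ℝⁿ`. -/
noncomputable def primeNorm (n : ℕ) (x : EuclideanSpace ℝ (Fin n)) : ℝ :=
  Real.sqrt (∑ i : Fin n, if (i : ℕ) = n - 1 then 0 else x i ^ 2)

/-- The Pogorelov-type function `u(x', x_n) = |x'|^γ h(x_n)` with `γ = 2 − 2/n`. -/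
noncomputable def uPog (n : ℕ) (hn : 3 ≤ n) (α : ℝ) (x : EuclideanSpace ℝ (Fin n)) : ℝ :=
  primeNorm n x ^ (2 - 2 / (n : ℝ)) * hPog α (lastCoord n hn x)

/-- The slab `X = ℝ^{n−1} × (−1, 1)`. -/
def XPog (n : ℕ) (hn : 3 ≤ n) : Set (EuclideanSpace ℝ (Fin n)) :=
  {x | lastCoord n hn x ∈ Set.Ioo (-1 : ℝ) 1}

/-! ### Auxiliary lemmas -/

/-- Tangent-line inequality for the Radon-type inequality, via weighted AM–GM. -/
lemma pog_tangent {γ u c θ : ℝ} (hγ : 1 < γ) (hu : 0 ≤ u) (hc : 0 < c) (hθ : 0 ≤ θ) :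
    γ * θ ^ (γ - 1) * u ≤ u ^ γ * c ^ (1 - γ) + (γ - 1) * (θ ^ γ * c) := by
  have hγ0 : (0:ℝ) < γ := by linarith
  have hne : γ ≠ 0 := ne_of_gt hγ0
  rcases hθ.eq_or_lt with rfl | hθ'
  · rw [Real.zero_rpow (by intro h; apply hne; linarith [sub_eq_zero.mp h] : γ - 1 ≠ 0),
      Real.zero_rpow hne]
    have : (0:ℝ) ≤ u ^ γ * c ^ (1 - γ) := by positivity
    nlinarith
  · have hp₁ : (0:ℝ) ≤ u ^ γ * c ^ (1 - γ) := by positivity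
    have hp₂ : (0:ℝ) ≤ θ ^ γ * c := by positivity
    have key := Real.geom_mean_le_arith_mean2_weighted (w₁ := 1/γ) (w₂ := 1 - 1/γ)
      (p₁ := u ^ γ * c ^ (1 - γ)) (p₂ := θ ^ γ * c)
      (by positivity) (by
        have : 1/γ ≤ 1 := by rw [div_le_one hγ0]; linarith
        linarith) hp₁ hp₂ (by ring)
    have h1 : (u ^ γ * c ^ (1 - γ)) ^ (1/γ) = u * c ^ ((1 - γ) * (1/γ)) := by
      rw [Real.mul_rpow (by positivity) (by positivity), ← Real.rpow_mul hu,
        ← Real.rpow_mul hc.le, mul_one_div, div_self hne, Real.rpow_one]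
    have h2 : (θ ^ γ * c) ^ (1 - 1/γ) = θ ^ (γ * (1 - 1/γ)) * c ^ (1 - 1/γ) := by
      rw [Real.mul_rpow (by positivity) hc.le, ← Real.rpow_mul hθ'.le]
    have e1 : γ * (1 - 1/γ) = γ - 1 := by field_simp
    have e2 : (1 - γ) * (1/γ) + (1 - 1/γ) = 0 := by field_simp; ring
    have hc1 : c ^ ((1 - γ) * (1/γ)) * c ^ (1 - 1/γ) = 1 := by
      rw [← Real.rpow_add hc, e2, Real.rpow_zero]
    have hprod : (u ^ γ * c ^ (1 - γ)) ^ (1/γ) * (θ ^ γ * c) ^ (1 - 1/γ)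
        = θ ^ (γ - 1) * u := by
      rw [h1, h2, e1]
      linear_combination u * θ ^ (γ - 1) * hc1
    rw [hprod] at key
    have := mul_le_mul_of_nonneg_left key hγ0.le
    have heq : γ * (1/γ * (u ^ γ * c ^ (1 - γ)) + (1 - 1/γ) * (θ ^ γ * c))
        = u ^ γ * c ^ (1 - γ) + (γ - 1) * (θ ^ γ * c) := by
      field_simp
    nlinarith [this, heq]

/-- Radon's inequality: joint convexity of `(r, s) ↦ r^γ s^{1-γ}`. -/
lemma pog_radon {γ a b c d : ℝ} (hγ : 1 < γ) (ha : 0 ≤ a) (hb : 0 ≤ b)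
    (hc : 0 < c) (hd : 0 < d) :
    (a + b) ^ γ * (c + d) ^ (1 - γ) ≤ a ^ γ * c ^ (1 - γ) + b ^ γ * d ^ (1 - γ) := by
  have hcd : (0:ℝ) < c + d := by linarith
  rcases eq_or_lt_of_le (by linarith : (0:ℝ) ≤ a + b) with hab0 | hab'
  · rw [← hab0, Real.zero_rpow (by linarith : γ ≠ 0), zero_mul]
    positivity
  · set θ := (a + b) / (c + d) with hθdef
    have hθpos : 0 < θ := by positivity
    have t1 := pog_tangent hγ ha hc hθpos.le
    have t2 := pog_tangent hγ hb hd hθpos.le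
    have habθ : a + b = θ * (c + d) := by
      rw [hθdef, div_mul_cancel₀ _ hcd.ne']
    have hθγ : θ ^ γ = θ ^ (γ - 1) * θ := by
      rw [← Real.rpow_add_one (ne_of_gt hθpos) (γ - 1)]
      norm_num
    have e2 : θ ^ (γ - 1) * (a + b) = θ ^ γ * (c + d) := by
      rw [hθγ, habθ]; ring
    have e1 : θ ^ γ * (c + d) = (a + b) ^ γ * (c + d) ^ (1 - γ) := by
      rw [hθdef, Real.div_rpow hab'.le hcd.le, Real.rpow_sub hcd, Real.rpow_one]
      field_simp
      all_goals ring
    have lhs_eq : γ * θ ^ (γ - 1) * a + γ * θ ^ (γ - 1) * b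
        = γ * (θ ^ γ * (c + d)) := by linear_combination γ * e2
    nlinarith [t1, t2, lhs_eq, e1]

/-- Projection zeroing out the last coordinate. -/
def pogProj (n : ℕ) (x : EuclideanSpace ℝ (Fin n)) : EuclideanSpace ℝ (Fin n) :=
  WithLp.toLp 2 (fun i => if (i : ℕ) = n - 1 then 0 else x i)

lemma primeNorm_eq_norm (n : ℕ) (x : EuclideanSpace ℝ (Fin n)) :
    primeNorm n x = ‖pogProj n x‖ := by
  rw [EuclideanSpace.norm_eq, primeNorm]
  congr 1
  apply Finset.sum_congr rfl
  intro i _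
  by_cases h : (i : ℕ) = n - 1 <;> simp [pogProj, h, Real.norm_eq_abs, sq_abs]

lemma pogProj_smul_add (n : ℕ) (a b : ℝ) (x y : EuclideanSpace ℝ (Fin n)) :
    pogProj n (a • x + b • y) = a • pogProj n x + b • pogProj n y := by
  ext i
  by_cases h : (i : ℕ) = n - 1 <;>
    simp [pogProj, h, PiLp.add_apply, PiLp.smul_apply, smul_eq_mul]

lemma primeNorm_nonneg (n : ℕ) (x : EuclideanSpace ℝ (Fin n)) : 0 ≤ primeNorm n x :=
  Real.sqrt_nonneg _

lemma primeNorm_combo (n : ℕ) {a b : ℝ} (ha : 0 ≤ a) (hb : 0 ≤ b)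
    (x y : EuclideanSpace ℝ (Fin n)) :
    primeNorm n (a • x + b • y) ≤ a * primeNorm n x + b * primeNorm n y := by
  rw [primeNorm_eq_norm, primeNorm_eq_norm, primeNorm_eq_norm, pogProj_smul_add]
  calc ‖a • pogProj n x + b • pogProj n y‖
      ≤ ‖a • pogProj n x‖ + ‖b • pogProj n y‖ := norm_add_le _ _
    _ = a * ‖pogProj n x‖ + b * ‖pogProj n y‖ := by
        rw [norm_smul, norm_smul, Real.norm_eq_abs, Real.norm_eq_abs,
          abs_of_nonneg ha, abs_of_nonneg hb]

lemma lastCoord_combo (n : ℕ) (hn : 3 ≤ n) (a b : ℝ) (x y : EuclideanSpace ℝ (Fin n)) :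
    lastCoord n hn (a • x + b • y) = a * lastCoord n hn x + b * lastCoord n hn y := by
  simp [lastCoord, PiLp.add_apply, PiLp.smul_apply, smul_eq_mul]

/-- Concavity step for `ψ(t) = (1 − t²)^β`. -/
lemma pog_psi_concave {β s t a b : ℝ} (hβ0 : 0 < β) (hβ1 : β < 1)
    (hs : s ∈ Set.Ioo (-1 : ℝ) 1) (ht : t ∈ Set.Ioo (-1 : ℝ) 1)
    (ha : 0 ≤ a) (hb : 0 ≤ b) (hab : a + b = 1) :
    a * (1 - s ^ 2) ^ β + b * (1 - t ^ 2) ^ β ≤ (1 - (a * s + b * t) ^ 2) ^ β := by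
  have h1 : (0:ℝ) ≤ 1 - s ^ 2 := by nlinarith [hs.1, hs.2]
  have h2 : (0:ℝ) ≤ 1 - t ^ 2 := by nlinarith [ht.1, ht.2]
  have keyid : 1 - (a * s + b * t) ^ 2 - (a * (1 - s ^ 2) + b * (1 - t ^ 2))
      = a * b * (s - t) ^ 2 := by
    linear_combination (-(1 + a * s ^ 2 + b * t ^ 2)) * hab
  have hmid : a * (1 - s ^ 2) + b * (1 - t ^ 2) ≤ 1 - (a * s + b * t) ^ 2 := by
    nlinarith [mul_nonneg (mul_nonneg ha hb) (sq_nonneg (s - t))]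
  have hcon := (Real.strictConcaveOn_rpow hβ0 hβ1).concaveOn
  have step := hcon.2 (Set.mem_Ici.mpr h1) (Set.mem_Ici.mpr h2) ha hb hab
  simp only [smul_eq_mul] at step
  calc a * (1 - s ^ 2) ^ β + b * (1 - t ^ 2) ^ β
      ≤ (a * (1 - s ^ 2) + b * (1 - t ^ 2)) ^ β := step
    _ ≤ (1 - (a * s + b * t) ^ 2) ^ β := by
        apply Real.rpow_le_rpow (by positivity) hmid hβ0.le

/-- **Appendix: the Pogorelov-type example, convexity and failure of strict convexity.**
For `n ≥ 3`, `γ = 2 − 2/n` and `0 < α < γ − 1`, the function `u(x', x_n) = |x'|^γ (1 − x_n²)^{−α}`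
is convex on `X = ℝ^{n−1} × (−1, 1)`, vanishes identically on the segment `{0} × (−1, 1)`,
and in particular is not strictly convex on `X`. -/
theorem pogorelov_example_convex_not_strictly_convex
    (n : ℕ) (hn : 3 ≤ n) (α : ℝ) (hα0 : 0 < α) (hα1 : α < (2 - 2 / (n : ℝ)) - 1) :
    ConvexOn ℝ (XPog n hn) (uPog n hn α) ∧
    (∀ x ∈ XPog n hn, (∀ i : Fin n, (i : ℕ) ≠ n - 1 → x i = 0) → uPog n hn α x = 0) ∧
    ¬ StrictConvexOn ℝ (XPog n hn) (uPog n hn α) := by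
  set γ : ℝ := 2 - 2 / (n : ℝ) with hγdef
  have hγ1 : 1 < γ := by linarith
  have hγ0 : (0:ℝ) < γ := by linarith
  have hγm1 : (0:ℝ) < γ - 1 := by linarith
  set β : ℝ := α / (γ - 1) with hβdef
  have hβ0 : 0 < β := by positivity
  have hβ1 : β < 1 := by rw [hβdef, div_lt_one hγm1]; linarith
  have hβγ : β * (1 - γ) = -α := by
    rw [hβdef]; field_simp
    all_goals ring
  -- rewrite of u at points of the slab
  have hu_eq : ∀ z : EuclideanSpace ℝ (Fin n), lastCoord n hn z ∈ Set.Ioo (-1:ℝ) 1 →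
      uPog n hn α z
        = primeNorm n z ^ γ * ((1 - (lastCoord n hn z) ^ 2) ^ β) ^ (1 - γ) := by
    intro z hz
    have hpos : (0:ℝ) ≤ 1 - (lastCoord n hn z) ^ 2 := by nlinarith [hz.1, hz.2]
    rw [uPog, hPog, ← hγdef]
    congr 1
    rw [← Real.rpow_mul hpos, hβγ]
  -- convexity of the slab
  have hXconv : Convex ℝ (XPog n hn) := by
    intro x hx y hy a b ha hb hab
    have := lastCoord_combo n hn a b x y
    simp only [XPog, Set.mem_setOf_eq] at hx hy ⊢
    rw [this]
    simpa using (convex_Ioo (-1:ℝ) 1) hx hy ha hb hab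
  -- convexity of u
  have hconv : ConvexOn ℝ (XPog n hn) (uPog n hn α) := by
    refine ⟨hXconv, ?_⟩
    intro x hx y hy a b ha hb hab
    rcases ha.eq_or_lt with rfl | ha'
    · have hb1 : b = 1 := by linarith
      subst hb1; simp
    rcases hb.eq_or_lt with rfl | hb'
    · have ha1 : a = 1 := by linarith
      subst ha1; simp
    set s := lastCoord n hn x with hsdef
    set t := lastCoord n hn y with htdef
    have hs : s ∈ Set.Ioo (-1:ℝ) 1 := hx
    have ht : t ∈ Set.Ioo (-1:ℝ) 1 := hy
    have hw : lastCoord n hn (a • x + b • y) = a * s + b * t := lastCoord_combo n hn a b x y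
    have hwmem : a * s + b * t ∈ Set.Ioo (-1:ℝ) 1 := by
      simpa using (convex_Ioo (-1:ℝ) 1) hs ht ha hb hab
    set r₁ := primeNorm n x with hr₁
    set r₂ := primeNorm n y with hr₂
    have hr₁n : 0 ≤ r₁ := primeNorm_nonneg n x
    have hr₂n : 0 ≤ r₂ := primeNorm_nonneg n y
    set ca := (1 - s ^ 2) ^ β with hcadef
    set cb := (1 - t ^ 2) ^ β with hcbdef
    have hcapos : 0 < ca := Real.rpow_pos_of_pos (by nlinarith [hs.1, hs.2]) β
    have hcbpos : 0 < cb := Real.rpow_pos_of_pos (by nlinarith [ht.1, ht.2]) β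
    have hux : uPog n hn α x = r₁ ^ γ * ca ^ (1 - γ) := hu_eq x hs
    have huy : uPog n hn α y = r₂ ^ γ * cb ^ (1 - γ) := hu_eq y ht
    have hucombo : uPog n hn α (a • x + b • y)
        = primeNorm n (a • x + b • y) ^ γ * ((1 - (a * s + b * t) ^ 2) ^ β) ^ (1 - γ) := by
      rw [hu_eq (a • x + b • y) (by rw [hw]; exact hwmem), hw]
    have hA : primeNorm n (a • x + b • y) ^ γ ≤ (a * r₁ + b * r₂) ^ γ :=
      Real.rpow_le_rpow (primeNorm_nonneg n _) (primeNorm_combo n ha hb x y) hγ0.le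
    have hψ : a * ca + b * cb ≤ (1 - (a * s + b * t) ^ 2) ^ β :=
      pog_psi_concave hβ0 hβ1 hs ht ha hb hab
    have hsumpos : 0 < a * ca + b * cb := add_pos (mul_pos ha' hcapos) (mul_pos hb' hcbpos)
    have hB : ((1 - (a * s + b * t) ^ 2) ^ β) ^ (1 - γ) ≤ (a * ca + b * cb) ^ (1 - γ) :=
      Real.rpow_le_rpow_of_nonpos hsumpos hψ (by linarith)
    have hg1 : uPog n hn α (a • x + b • y)
        ≤ (a * r₁ + b * r₂) ^ γ * (a * ca + b * cb) ^ (1 - γ) := by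
      rw [hucombo]
      have h1 : (0:ℝ) ≤ ((1 - (a * s + b * t) ^ 2) ^ β) ^ (1 - γ) :=
        Real.rpow_nonneg (Real.rpow_nonneg (by nlinarith [hwmem.1, hwmem.2]) β) (1 - γ)
      have h2 : (0:ℝ) ≤ (a * r₁ + b * r₂) ^ γ :=
        Real.rpow_nonneg (add_nonneg (mul_nonneg ha hr₁n) (mul_nonneg hb hr₂n)) γ
      exact mul_le_mul hA hB h1 h2
    have hradon := pog_radon hγ1 (mul_nonneg ha hr₁n) (mul_nonneg hb hr₂n)
      (mul_pos ha' hcapos) (mul_pos hb' hcbpos)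
    have haa : a ^ γ * a ^ (1 - γ) = a := by
      rw [← Real.rpow_add ha']; norm_num
    have hbb : b ^ γ * b ^ (1 - γ) = b := by
      rw [← Real.rpow_add hb']; norm_num
    have hsplita : (a * r₁) ^ γ * (a * ca) ^ (1 - γ) = a * (r₁ ^ γ * ca ^ (1 - γ)) := by
      rw [Real.mul_rpow ha hr₁n, Real.mul_rpow ha hcapos.le]
      linear_combination r₁ ^ γ * ca ^ (1 - γ) * haa
    have hsplitb : (b * r₂) ^ γ * (b * cb) ^ (1 - γ) = b * (r₂ ^ γ * cb ^ (1 - γ)) := by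
      rw [Real.mul_rpow hb hr₂n, Real.mul_rpow hb hcbpos.le]
      linear_combination r₂ ^ γ * cb ^ (1 - γ) * hbb
    simp only [smul_eq_mul]
    rw [hux, huy]
    linarith [hg1, hradon, hsplita, hsplitb]
  -- vanishing on the segment
  have hzero : ∀ x ∈ XPog n hn, (∀ i : Fin n, (i : ℕ) ≠ n - 1 → x i = 0) →
      uPog n hn α x = 0 := by
    intro x hx hcoords
    have hpn : primeNorm n x = 0 := by
      rw [primeNorm]
      have : (∑ i : Fin n, if (i : ℕ) = n - 1 then 0 else x i ^ 2) = 0 := by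
        apply Finset.sum_eq_zero
        intro i _
        by_cases h : (i : ℕ) = n - 1
        · simp [h]
        · simp [h, hcoords i h]
      rw [this, Real.sqrt_zero]
    rw [uPog, hpn, Real.zero_rpow (ne_of_gt hγ0), zero_mul]
  refine ⟨hconv, hzero, ?_⟩
  -- not strictly convex
  intro hsc
  have hlt : n - 1 < n := by omega
  set i₀ : Fin n := ⟨n - 1, hlt⟩ with hi₀
  set p₁ : EuclideanSpace ℝ (Fin n) := EuclideanSpace.single i₀ (1/2 : ℝ) with hp₁
  have hlast0 : lastCoord n hn (0 : EuclideanSpace ℝ (Fin n)) = 0 := rfl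
  have hlast1 : lastCoord n hn p₁ = 1/2 := by
    simp [lastCoord, hp₁, EuclideanSpace.single_apply, hi₀]
  have hmem0 : (0 : EuclideanSpace ℝ (Fin n)) ∈ XPog n hn := by
    simp [XPog, hlast0]
  have hmem1 : p₁ ∈ XPog n hn := by
    simp only [XPog, Set.mem_setOf_eq, hlast1]
    norm_num
  have hne01 : (0 : EuclideanSpace ℝ (Fin n)) ≠ p₁ := by
    intro h
    have := congrArg (fun z : EuclideanSpace ℝ (Fin n) => z i₀) h
    simp [hp₁, EuclideanSpace.single_apply] at this
  have key := hsc.2 hmem0 hmem1 hne01 (by norm_num : (0:ℝ) < 1/2)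
    (by norm_num : (0:ℝ) < 1/2) (by norm_num)
  have hmidcoords : ∀ i : Fin n, (i : ℕ) ≠ n - 1 →
      ((1/2 : ℝ) • (0 : EuclideanSpace ℝ (Fin n)) + (1/2 : ℝ) • p₁) i = 0 := by
    intro i hi
    have : p₁ i = 0 := by
      simp only [hp₁, EuclideanSpace.single_apply]
      rw [if_neg]
      intro h; apply hi; rw [h]
    simp [PiLp.add_apply, PiLp.smul_apply, this]
  have hmidlast : lastCoord n hn ((1/2 : ℝ) • (0 : EuclideanSpace ℝ (Fin n)) + (1/2 : ℝ) • p₁)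
      = 1/4 := by
    rw [lastCoord_combo, hlast0, hlast1]; norm_num
  have hmidmem : ((1/2 : ℝ) • (0 : EuclideanSpace ℝ (Fin n)) + (1/2 : ℝ) • p₁) ∈ XPog n hn := by
    simp only [XPog, Set.mem_setOf_eq, hmidlast]
    norm_num
  have hu0 : uPog n hn α (0 : EuclideanSpace ℝ (Fin n)) = 0 := by
    apply hzero _ hmem0
    intro i _
    rfl
  have hu1 : uPog n hn α p₁ = 0 := by
    apply hzero _ hmem1
    intro i hi
    simp only [hp₁, EuclideanSpace.single_apply]
    rw [if_neg]
    intro h; apply hi; rw [h]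
  have humid : uPog n hn α ((1/2 : ℝ) • (0 : EuclideanSpace ℝ (Fin n)) + (1/2 : ℝ) • p₁) = 0 :=
    hzero _ hmidmem hmidcoords
  rw [humid, hu0, hu1] at key
  simp at key
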